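/- For the test field U(x,y) = (α(x+y), α(x-y)) with 0 < α and α√2 < 1, scheme (I) (zero corrective term) applied to any target M^d converges: Δ^j → 0 with ‖Δ^j‖ ≤ (α√2)^{j-1} ‖Δ^1‖ in the Euclidean norm. -/

import Mathlib

open Filter Topology

/-- For the test field U(x,y) = (α(x+y), α(x-y)) with 0 < α and α√2 < 1,
scheme (I) converges: Δ^j → 0 with ‖Δ^j‖ ≤ (α√2)^(j-1) ‖Δ^1‖ (Euclidean norm). -/
theorem test_field_scheme_I_converges
    (α : ℝ) (hα : 0 < α) (h2 : α * Real.sqrt 2 < 1)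
    (U : EuclideanSpace ℝ (Fin 2) → EuclideanSpace ℝ (Fin 2))
    (hU : ∀ p : EuclideanSpace ℝ (Fin 2),
      U p 0 = α * (p 0 + p 1) ∧ U p 1 = α * (p 0 - p 1))
    (Md : EuclideanSpace ℝ (Fin 2)) (M Δ : ℕ → EuclideanSpace ℝ (Fin 2))
    (hM1 : M 1 = Md)
    (hM : ∀ j, 2 ≤ j → M j = M (j - 1) + Δ (j - 1))
    (hΔ : ∀ j, 1 ≤ j → Δ j = Md - M j - U (M j)) :
    Tendsto Δ atTop (𝓝 0) ∧
      ∀ j, 1 ≤ j → ‖Δ j‖ ≤ (α * Real.sqrt 2) ^ (j - 1) * ‖Δ 1‖ := by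
  set r := α * Real.sqrt 2 with hr
  have hr0 : 0 ≤ r := by positivity
  have normeq : ∀ v : EuclideanSpace ℝ (Fin 2),
      ‖v‖ = Real.sqrt ((v 0) ^ 2 + (v 1) ^ 2) := by
    intro v
    rw [EuclideanSpace.norm_eq]
    simp [Fin.sum_univ_two, Real.norm_eq_abs, sq_abs]
  have key : ∀ j, 1 ≤ j → ‖Δ (j + 1)‖ = r * ‖Δ j‖ := by
    intro j hj
    have hMj : M (j + 1) = M j + Δ j := by
      have := hM (j + 1) (by omega)
      simpa using this
    have hD1 := hΔ j hj
    have hD2 := hΔ (j + 1) (by omega)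
    have eΔ0 : Δ j 0 = Md 0 - M j 0 - α * (M j 0 + M j 1) := by
      have := congrArg (fun v : EuclideanSpace ℝ (Fin 2) => v 0) hD1
      have hu := (hU (M j)).1
      simp only [PiLp.sub_apply] at this
      rw [this, hu]
    have eΔ1 : Δ j 1 = Md 1 - M j 1 - α * (M j 0 - M j 1) := by
      have := congrArg (fun v : EuclideanSpace ℝ (Fin 2) => v 1) hD1
      have hu := (hU (M j)).2
      simp only [PiLp.sub_apply] at this
      rw [this, hu]
    have hM0 : M (j + 1) 0 = M j 0 + Δ j 0 := by
      have := congrArg (fun v : EuclideanSpace ℝ (Fin 2) => v 0) hMj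
      simpa [PiLp.add_apply] using this
    have hM1' : M (j + 1) 1 = M j 1 + Δ j 1 := by
      have := congrArg (fun v : EuclideanSpace ℝ (Fin 2) => v 1) hMj
      simpa [PiLp.add_apply] using this
    have h0 : Δ (j + 1) 0 = -(α * (Δ j 0 + Δ j 1)) := by
      have := congrArg (fun v : EuclideanSpace ℝ (Fin 2) => v 0) hD2
      simp only [PiLp.sub_apply] at this
      rw [this, (hU (M (j + 1))).1, hM0, hM1']
      rw [eΔ0, eΔ1]
      ring
    have h1 : Δ (j + 1) 1 = -(α * (Δ j 0 - Δ j 1)) := by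
      have := congrArg (fun v : EuclideanSpace ℝ (Fin 2) => v 1) hD2
      simp only [PiLp.sub_apply] at this
      rw [this, (hU (M (j + 1))).2, hM0, hM1']
      rw [eΔ0, eΔ1]
      ring
    rw [normeq, normeq, h0, h1]
    set a := Δ j 0
    set b := Δ j 1
    have hrhs : r * Real.sqrt (a ^ 2 + b ^ 2)
        = Real.sqrt (α ^ 2 * (2 * (a ^ 2 + b ^ 2))) := by
      rw [Real.sqrt_mul (by positivity), Real.sqrt_mul (by norm_num),
        Real.sqrt_sq hα.le, hr, mul_assoc]
    rw [hrhs]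
    congr 1
    ring
  have bound : ∀ j, 1 ≤ j → ‖Δ j‖ ≤ r ^ (j - 1) * ‖Δ 1‖ := by
    intro j hj
    induction j, hj using Nat.le_induction with
    | base => simp
    | succ n hn ih =>
      have hn' : n - 1 + 1 = n := by omega
      rw [key n hn]
      calc r * ‖Δ n‖ ≤ r * (r ^ (n - 1) * ‖Δ 1‖) :=
            mul_le_mul_of_nonneg_left ih hr0
        _ = r ^ (n - 1 + 1) * ‖Δ 1‖ := by ring
        _ = r ^ (n + 1 - 1) * ‖Δ 1‖ := by rw [hn', Nat.add_sub_cancel]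
  refine ⟨?_, bound⟩
  rw [tendsto_zero_iff_norm_tendsto_zero]
  have hg : Tendsto (fun j : ℕ => r ^ (j - 1) * ‖Δ 1‖) atTop (𝓝 0) := by
    have h1 : Tendsto (fun j : ℕ => r ^ (j - 1)) atTop (𝓝 0) :=
      (tendsto_pow_atTop_nhds_zero_of_lt_one hr0 h2).comp
        (tendsto_sub_atTop_nat 1)
    simpa using h1.mul_const ‖Δ 1‖
  refine squeeze_zero' ?_ ?_ hg
  · filter_upwards with j using norm_nonneg _
  · filter_upwards [eventually_ge_atTop 1] with j hj using bound j hj
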